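/- Let G be a commutative group, g ∈ G, and let q be a positive natural number such that g has order q (orderOf g = q). Let m be a natural number and x : Fin m → ZMod q, and for each i define y i = (∑_{j < i} x j) − (∑_{j > i} x j) in ZMod q. Then ∏_{i} g ^ (x i * y i).val = 1, i.e., the product of the published values g^{N_i} with N_i = x_i y_i equals the identity. -/

import Mathlib

/-- Step 1 of the appendix protocol: the product of the published values `g^{N_i}` with
`N_i = x_i y_i` equals the identity, where `y i = ∑_{j < i} x j − ∑_{j > i} x j` in `ZMod q`
and `g` has order `q`. -/
theorem av_net_product_one (G : Type*) [CommGroup G] (g : G) (q : ℕ) (hq : 0 < q)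
    (horder : orderOf g = q) (m : ℕ) (x y : Fin m → ZMod q)
    (hy : ∀ i, y i = (∑ j ∈ Finset.Iio i, x j) - (∑ j ∈ Finset.Ioi i, x j)) :
    ∏ i, g ^ (x i * y i).val = 1 := by
  haveI : NeZero q := ⟨hq.ne'⟩
  have hsum : ∑ i, x i * y i = 0 := by
    have h1 : ∑ i, x i * y i =
        (∑ i, ∑ j ∈ Finset.Iio i, x i * x j) - ∑ i, ∑ j ∈ Finset.Ioi i, x i * x j := by
      rw [← Finset.sum_sub_distrib]
      refine Finset.sum_congr rfl fun i _ => ?_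
      rw [hy i, mul_sub, Finset.mul_sum, Finset.mul_sum]
    have h2 : ∑ i, ∑ j ∈ Finset.Ioi i, x i * x j =
        ∑ i, ∑ j ∈ Finset.Iio i, x i * x j := by
      rw [Finset.sum_sigma', Finset.sum_sigma']
      apply Finset.sum_nbij' (fun p => ⟨p.2, p.1⟩) (fun p => ⟨p.2, p.1⟩) <;>
        simp [Finset.mem_Ioi, Finset.mem_Iio, mul_comm]
    rw [h1, h2, sub_self]
  rw [Finset.prod_pow_eq_pow_sum, ← orderOf_dvd_iff_pow_eq_one, horder,
    ← ZMod.natCast_eq_zero_iff]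
  push_cast
  simpa [ZMod.natCast_val, ZMod.cast_id] using hsum
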